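/- Let I : [0,1/2] → ℝ⁺ be a non-decreasing function with I(t) > 0 for t > 0, and let ε ∈ (0,1/2). Let dμ(x) = e^{−V(x)} dx be a probability measure on ℝ^d with V locally bounded, and assume that every Borel set A with a := min(μ(A), μ(A^c)) < ε satisfies μ⁺(∂A) ≥ I(a). Then there exists a constant c > 0 such that every Borel set A satisfies μ⁺(∂A) ≥ c · I(min(μ(A), μ(A^c))). -/

import Mathlib

open MeasureTheory Filter Set Metric ENNReal

open MeasureTheory Filter Set

/-- The boundary measure (Minkowski content) of a set `A`:
`μ⁺(∂A) = liminf_{h→0⁺} μ({x ∉ A : dist(x,A) ≤ h})/h`. -/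
noncomputable def boundaryMeasure {d : ℕ} (μ : Measure (EuclideanSpace ℝ (Fin d)))
    (A : Set (EuclideanSpace ℝ (Fin d))) : ENNReal :=
  Filter.liminf (fun h : ℝ => μ {x | x ∉ A ∧ Metric.infDist x A ≤ h} / ENNReal.ofReal h)
    (nhdsWithin 0 (Set.Ioi 0))

lemma crossing_aux {f : ℝ → ℝ} {L h : ℝ} (hL : 0 < L) (hh : 0 < h)
    (hf : ∀ s t : ℝ, |f s - f t| ≤ L * |s - t|) (hf0 : f 0 = 0)
    (hex : ∃ t ∈ Icc (0:ℝ) 1, h < f t) :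
    ∃ t₀ t₂ : ℝ, 0 ≤ t₀ ∧ t₂ ≤ 1 ∧ h / (2*L) ≤ t₂ - t₀ ∧
      ∀ t ∈ Ioc t₀ t₂, f t ∈ Ioc (h/2) h := by
  obtain ⟨t₁, ht₁, ht₁h⟩ := hex
  have hcont : Continuous f := by
    have : LipschitzWith ⟨L, hL.le⟩ f := by
      apply LipschitzWith.of_dist_le_mul
      intro x y
      rw [Real.dist_eq, Real.dist_eq]; exact hf x y
    exact this.continuous
  -- t₂ : first time f reaches h
  set S₂ : Set ℝ := {t ∈ Icc 0 t₁ | h ≤ f t} with hS₂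
  have hS₂ne : S₂.Nonempty := ⟨t₁, ⟨ht₁.1, le_refl _⟩, ht₁h.le⟩
  have hS₂closed : IsClosed S₂ := (isClosed_Icc.inter (isClosed_le continuous_const hcont))
  have hS₂cpt : IsCompact S₂ := isCompact_Icc.of_isClosed_subset hS₂closed (fun t ht => ht.1)
  set t₂ := sInf S₂ with ht₂def
  have ht₂mem : t₂ ∈ S₂ := hS₂cpt.sInf_mem hS₂ne
  have ht₂lb : ∀ t ∈ S₂, t₂ ≤ t := fun t ht => csInf_le hS₂cpt.bddBelow ht
  have hlt : ∀ t, 0 ≤ t → t < t₂ → f t < h := by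
    intro t ht0 htlt
    by_contra hge
    push_neg at hge
    exact absurd (ht₂lb t ⟨⟨ht0, htlt.le.trans ht₂mem.1.2⟩, hge⟩) (not_le.2 htlt)
  have hft₂ : f t₂ = h := by
    refine le_antisymm ?_ ht₂mem.2
    by_contra hgt
    push_neg at hgt
    have ht₂pos : 0 < t₂ := by
      rcases lt_or_ge 0 t₂ with h' | h'
      · exact h'
      · exfalso
        have : t₂ ∈ Icc (0:ℝ) t₁ := ht₂mem.1
        have ht₂0 : t₂ = 0 := le_antisymm h' this.1
        rw [ht₂0, hf0] at hgt; linarith [ht₂mem.2]; 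
    set η := min t₂ ((f t₂ - h) / (2*L)) with hη
    have hη0 : 0 < η := lt_min ht₂pos (div_pos (by linarith) (by positivity))
    have hstep : f (t₂ - η) ≥ h := by
      have := hf t₂ (t₂ - η)
      have h1 : |f t₂ - f (t₂ - η)| ≤ L * η := by
        have : |t₂ - (t₂ - η)| = η := by rw [abs_of_nonneg] <;> [ring_nf; linarith]
        calc |f t₂ - f (t₂ - η)| ≤ L * |t₂ - (t₂ - η)| := hf _ _
        _ = L * η := by rw [this]
      have h2 : L * η ≤ (f t₂ - h)/2 := by
        have : η ≤ (f t₂ - h) / (2*L) := min_le_right _ _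
        calc L * η ≤ L * ((f t₂ - h)/(2*L)) := by nlinarith
        _ = (f t₂ - h)/2 := by field_simp
      have := abs_le.1 h1
      nlinarith
    have hmem : t₂ - η ∈ S₂ := ⟨⟨by linarith [min_le_left t₂ ((f t₂ - h) / (2*L))], by linarith [ht₂mem.1.2]⟩, hstep⟩
    linarith [ht₂lb _ hmem]
  -- t₀ : last time before t₂ with f ≤ h/2
  set S₀ : Set ℝ := {t ∈ Icc 0 t₂ | f t ≤ h/2} with hS₀
  have hS₀ne : S₀.Nonempty := ⟨0, ⟨le_refl _, ht₂mem.1.1⟩, by rw [hf0]; linarith⟩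
  have hS₀closed : IsClosed S₀ := (isClosed_Icc.inter (isClosed_le hcont continuous_const))
  have hS₀cpt : IsCompact S₀ := isCompact_Icc.of_isClosed_subset hS₀closed (fun t ht => ht.1)
  set t₀ := sSup S₀ with ht₀def
  have ht₀mem : t₀ ∈ S₀ := hS₀cpt.sSup_mem hS₀ne
  have ht₀ub : ∀ t ∈ S₀, t ≤ t₀ := fun t ht => le_csSup hS₀cpt.bddAbove ht
  have ht₀lt : t₀ < t₂ := by
    rcases lt_or_ge t₀ t₂ with h' | h'
    · exact h'
    · exfalso
      have heq : t₀ = t₂ := le_antisymm ht₀mem.1.2 h'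
      have h2 := ht₀mem.2
      rw [heq, hft₂] at h2
      linarith
  refine ⟨t₀, t₂, ht₀mem.1.1, ht₂mem.1.2.trans ht₁.2, ?_, ?_⟩
  · have := hf t₂ t₀
    have habs : |t₂ - t₀| = t₂ - t₀ := abs_of_nonneg (by linarith)
    rw [habs] at this
    have := abs_le.1 this
    rw [hft₂] at this
    have h1 : h - h/2 ≤ L * (t₂ - t₀) := by linarith [ht₀mem.2]
    rw [div_le_iff₀ (by positivity)]
    nlinarith
  · intro t ht
    constructor
    · by_contra hle
      push_neg at hle
      have : t ∈ S₀ := ⟨⟨le_trans ht₀mem.1.1 ht.1.le, ht.2⟩, hle⟩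
      linarith [ht₀ub t this, ht.1]
    · rcases eq_or_lt_of_le ht.2 with h' | h'
      · rw [h', hft₂]
      · exact (hlt t (le_trans ht₀mem.1.1 ht.1.le) h').le

lemma density_lb {d : ℕ} (V : EuclideanSpace ℝ (Fin d) → ℝ) (M : ℝ)
    (K S : Set (EuclideanSpace ℝ (Fin d))) (hS : MeasurableSet S) (hSK : S ⊆ K)
    (hM : ∀ x ∈ K, |V x| ≤ M) :
    ENNReal.ofReal (Real.exp (-M)) * volume S ≤
      (volume.withDensity (fun x => ENNReal.ofReal (Real.exp (-V x)))) S := by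
  rw [withDensity_apply _ hS, ← lintegral_indicator hS, ← lintegral_indicator_const hS]
  apply lintegral_mono
  intro x
  by_cases hx : x ∈ S
  · simp only [Set.indicator_of_mem hx]
    apply ENNReal.ofReal_le_ofReal
    apply Real.exp_le_exp.2
    have := hM x (hSK hx)
    have := abs_le.1 this
    linarith
  · simp [Set.indicator_of_notMem hx]

lemma density_ub {d : ℕ} (V : EuclideanSpace ℝ (Fin d) → ℝ) (M : ℝ)
    (K S : Set (EuclideanSpace ℝ (Fin d))) (hS : MeasurableSet S) (hSK : S ⊆ K)
    (hM : ∀ x ∈ K, |V x| ≤ M) :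
    (volume.withDensity (fun x => ENNReal.ofReal (Real.exp (-V x)))) S ≤
      ENNReal.ofReal (Real.exp M) * volume S := by
  rw [withDensity_apply _ hS, ← lintegral_indicator hS, ← lintegral_indicator_const hS]
  apply lintegral_mono
  intro x
  by_cases hx : x ∈ S
  · simp only [Set.indicator_of_mem hx]
    apply ENNReal.ofReal_le_ofReal
    apply Real.exp_le_exp.2
    have := abs_le.1 (hM x (hSK hx))
    linarith
  · simp [Set.indicator_of_notMem hx]

lemma scaled_lintegral {d : ℕ} (B : Set (EuclideanSpace ℝ (Fin d))) (hB : MeasurableSet B)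
    (a : ℝ) (ha : 1/2 ≤ a) (c : EuclideanSpace ℝ (Fin d)) :
    ∫⁻ x, B.indicator (fun _ => (1:ℝ≥0∞)) (a • x + c) ≤ ENNReal.ofReal (2^d) * volume B := by
  have ha0 : a ≠ 0 := by positivity
  have hmeas : Measurable (fun x : EuclideanSpace ℝ (Fin d) => a • x + c) :=
    (measurable_id.const_smul a).add_const c
  have heq : (fun x : EuclideanSpace ℝ (Fin d) => B.indicator (fun _ => (1:ℝ≥0∞)) (a • x + c))
      = ((fun x => a • x + c) ⁻¹' B).indicator (fun _ => (1:ℝ≥0∞)) := by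
    funext x
    by_cases hx : a • x + c ∈ B <;> simp [Set.indicator, hx, Set.mem_preimage]
  rw [heq, lintegral_indicator_const (hmeas hB)]
  have hpre : (fun x : EuclideanSpace ℝ (Fin d) => a • x + c) ⁻¹' B
      = (a • ·) ⁻¹' ((· + c) ⁻¹' B) := rfl
  rw [hpre, Measure.addHaar_preimage_smul volume ha0, measure_preimage_add_right]
  rw [one_mul]
  apply mul_le_mul_left
  apply ENNReal.ofReal_le_ofReal
  rw [abs_inv, abs_pow]
  have h1 : (1/2:ℝ)^d ≤ |a|^d := by
    apply pow_le_pow_left₀ (by norm_num)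
    rw [abs_of_pos (by linarith)]; exact ha
  have h2 : (0:ℝ) < |a|^d := by positivity
  have key : (1:ℝ) ≤ 2^d * |a|^d := by
    calc (1:ℝ) = 2^d * (1/2:ℝ)^d := by rw [← mul_pow]; norm_num
    _ ≤ 2^d * |a|^d := mul_le_mul_of_nonneg_left h1 (by positivity)
  rw [finrank_euclideanSpace_fin, inv_eq_one_div, div_le_iff₀ h2]
  linarith
set_option maxHeartbeats 4000000 in
theorem stmt2 {d : ℕ} (I : ℝ → ℝ)
    (hImono : MonotoneOn I (Set.Icc 0 (1 / 2)))
    (hInonneg : ∀ t ∈ Set.Icc (0 : ℝ) (1 / 2), 0 ≤ I t)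
    (hIpos : ∀ t ∈ Set.Ioc (0 : ℝ) (1 / 2), 0 < I t)
    (ε : ℝ) (hε : ε ∈ Set.Ioo (0 : ℝ) (1 / 2))
    (V : EuclideanSpace ℝ (Fin d) → ℝ)
    (hVloc : ∀ r : ℝ, ∃ M : ℝ, ∀ x, ‖x‖ ≤ r → |V x| ≤ M)
    (μ : Measure (EuclideanSpace ℝ (Fin d)))
    (hμ : μ = volume.withDensity (fun x => ENNReal.ofReal (Real.exp (-V x))))
    [IsProbabilityMeasure μ]
    (hiso : ∀ A : Set (EuclideanSpace ℝ (Fin d)), MeasurableSet A →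
      min (μ A).toReal (μ Aᶜ).toReal < ε →
      ENNReal.ofReal (I (min (μ A).toReal (μ Aᶜ).toReal)) ≤ boundaryMeasure μ A) :
    ∃ c > (0 : ℝ), ∀ A : Set (EuclideanSpace ℝ (Fin d)), MeasurableSet A →
      ENNReal.ofReal (c * I (min (μ A).toReal (μ Aᶜ).toReal)) ≤ boundaryMeasure μ A := by
  obtain ⟨hε0, hε12⟩ := hε
  -- choose a large ball K capturing most of the mass
  obtain ⟨R, hR1, hRc⟩ : ∃ R : ℝ, 1 ≤ R ∧
      μ (Metric.closedBall (0 : EuclideanSpace ℝ (Fin d)) R)ᶜ ≤ ENNReal.ofReal (ε/2) := by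
    have hmono : Monotone (fun n : ℕ => Metric.closedBall (0 : EuclideanSpace ℝ (Fin d)) (n:ℝ)) :=
      fun a b hab => Metric.closedBall_subset_closedBall (by exact_mod_cast hab)
    have hUnion : (⋃ n : ℕ, Metric.closedBall (0 : EuclideanSpace ℝ (Fin d)) (n:ℝ)) = univ := by
      ext x
      simp only [mem_iUnion, Metric.mem_closedBall, mem_univ, iff_true]
      obtain ⟨n, hn⟩ := exists_nat_ge (dist x 0)
      exact ⟨n, hn⟩
    have htend := tendsto_measure_iUnion_atTop (μ := μ) hmono
    rw [hUnion, measure_univ] at htend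
    have he1 : ENNReal.ofReal (ε/2) ≤ 1 := by
      rw [← ENNReal.ofReal_one]
      exact ENNReal.ofReal_le_ofReal (by linarith)
    have hlt : (1:ℝ≥0∞) - ENNReal.ofReal (ε/2) < 1 :=
      ENNReal.sub_lt_self ENNReal.one_ne_top one_ne_zero
        (ENNReal.ofReal_pos.2 (by linarith : (0:ℝ) < ε/2)).ne'
    have hev := (htend.eventually (eventually_gt_nhds hlt)).and (eventually_ge_atTop 1)
    obtain ⟨n, hn, hn1⟩ := hev.exists
    refine ⟨(n:ℝ), by exact_mod_cast hn1, ?_⟩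
    rw [measure_compl measurableSet_closedBall (measure_ne_top μ _), measure_univ]
    rw [tsub_le_iff_right]
    calc (1:ℝ≥0∞) = ENNReal.ofReal (ε/2) + (1 - ENNReal.ofReal (ε/2)) :=
          (add_tsub_cancel_of_le he1).symm
    _ ≤ ENNReal.ofReal (ε/2) + μ (Metric.closedBall 0 (n:ℝ)) := add_le_add_right hn.le _
  set K := Metric.closedBall (0 : EuclideanSpace ℝ (Fin d)) R with hKdef
  have hR0 : (0:ℝ) < R := by linarith
  have hK : MeasurableSet K := measurableSet_closedBall
  have hKconv : Convex ℝ K := convex_closedBall _ _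
  obtain ⟨M, hM⟩ := hVloc R
  have hM' : ∀ x ∈ K, |V x| ≤ M := fun x hx => hM x (mem_closedBall_zero_iff.1 hx)
  have hvolK_ne_top : volume K ≠ ⊤ := measure_closedBall_lt_top.ne
  set κ := (volume K).toReal with hκdef
  have hκ0 : (0:ℝ) < κ :=
    ENNReal.toReal_pos (measure_closedBall_pos volume _ hR0).ne' hvolK_ne_top
  have hvolK : volume K = ENNReal.ofReal κ := (ENNReal.ofReal_toReal hvolK_ne_top).symm
  set δ := ε/2 * Real.exp (-M) with hδdef
  have hδ0 : (0:ℝ) < δ := by positivity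
  set c₂ := (1/(4*R) * (δ/2) * δ) / (2^d * κ) with hc₂def
  have hc₂0 : (0:ℝ) < c₂ := by positivity
  set c₁ := Real.exp (-M) * min (δ/(2*R)) c₂ with hc₁def
  have hc₁0 : (0:ℝ) < c₁ := mul_pos (Real.exp_pos _) (lt_min (by positivity) hc₂0)
  have hI2 : 0 < I (1/2) := hIpos (1/2) ⟨by norm_num, le_refl _⟩
  refine ⟨min 1 (c₁ / I (1/2)), lt_min one_pos (div_pos hc₁0 hI2), ?_⟩
  intro A hA
  set c := min 1 (c₁ / I (1/2)) with hcdef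
  have hc0 : (0:ℝ) < c := lt_min one_pos (div_pos hc₁0 hI2)
  set m := min (μ A).toReal (μ Aᶜ).toReal with hm
  have hsum : (μ A).toReal + (μ Aᶜ).toReal = 1 := by
    have h := measure_add_measure_compl (μ := μ) hA
    rw [measure_univ] at h
    have h2 := congrArg ENNReal.toReal h
    rwa [ENNReal.toReal_add (measure_ne_top μ A) (measure_ne_top μ Aᶜ), ENNReal.toReal_one] at h2
  have hm0 : 0 ≤ m := le_min ENNReal.toReal_nonneg ENNReal.toReal_nonneg
  have hm12 : m ≤ 1/2 := by
    rcases le_total (μ A).toReal (μ Aᶜ).toReal with hab | hab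
    · rw [hm, min_eq_left hab]; linarith
    · rw [hm, min_eq_right hab]; linarith
  by_cases hsmall : m < ε
  · calc ENNReal.ofReal (c * I m) ≤ ENNReal.ofReal (I m) := by
          apply ENNReal.ofReal_le_ofReal
          have h1 : c ≤ 1 := min_le_left _ _
          nlinarith [hInonneg m ⟨hm0, hm12⟩]
    _ ≤ boundaryMeasure μ A := hiso A hA hsmall
  · push_neg at hsmall
    have hεA : ENNReal.ofReal ε ≤ μ A := by
      rw [← ENNReal.ofReal_toReal (measure_ne_top μ A)]
      exact ENNReal.ofReal_le_ofReal (le_trans hsmall (min_le_left _ _))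
    have hεAc : ENNReal.ofReal ε ≤ μ Aᶜ := by
      rw [← ENNReal.ofReal_toReal (measure_ne_top μ Aᶜ)]
      exact ENNReal.ofReal_le_ofReal (le_trans hsmall (min_le_right _ _))
    -- volume lower bounds inside K
    have hvol_of_meas : ∀ S : Set (EuclideanSpace ℝ (Fin d)), MeasurableSet S → S ⊆ Kᶜᶜ →
        True := fun _ _ _ => trivial
    have hvolA : ENNReal.ofReal δ ≤ volume (A ∩ K) := by
      have hsub : A ⊆ (A ∩ K) ∪ Kᶜ := by
        intro x hx
        by_cases hxK : x ∈ K
        · exact Or.inl ⟨hx, hxK⟩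
        · exact Or.inr hxK
      have h1 : μ A ≤ μ (A ∩ K) + μ Kᶜ := (measure_mono hsub).trans (measure_union_le _ _)
      have h2 : ENNReal.ofReal (ε/2) + ENNReal.ofReal (ε/2) ≤ μ (A ∩ K) + ENNReal.ofReal (ε/2) := by
        calc ENNReal.ofReal (ε/2) + ENNReal.ofReal (ε/2) = ENNReal.ofReal ε := by
              rw [← ENNReal.ofReal_add (by positivity) (by positivity)]; norm_num
        _ ≤ μ A := hεA
        _ ≤ μ (A ∩ K) + μ Kᶜ := h1
        _ ≤ μ (A ∩ K) + ENNReal.ofReal (ε/2) := add_le_add_right hRc _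
      have h3 : ENNReal.ofReal (ε/2) ≤ μ (A ∩ K) :=
        (ENNReal.add_le_add_iff_right ENNReal.ofReal_ne_top).1 h2
      have h4 : μ (A ∩ K) ≤ ENNReal.ofReal (Real.exp M) * volume (A ∩ K) := by
        rw [hμ]; exact density_ub V M K (A ∩ K) (hA.inter hK) inter_subset_right hM'
      calc ENNReal.ofReal δ = ENNReal.ofReal (Real.exp (-M)) * ENNReal.ofReal (ε/2) := by
            rw [← ENNReal.ofReal_mul (Real.exp_pos _).le]; congr 1; rw [hδdef]; ring
      _ ≤ ENNReal.ofReal (Real.exp (-M)) * (ENNReal.ofReal (Real.exp M) * volume (A ∩ K)) :=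
            mul_le_mul_right (h3.trans h4) _
      _ = (ENNReal.ofReal (Real.exp (-M)) * ENNReal.ofReal (Real.exp M)) * volume (A ∩ K) :=
            (mul_assoc _ _ _).symm
      _ = volume (A ∩ K) := by
            rw [← ENNReal.ofReal_mul (Real.exp_pos _).le, ← Real.exp_add]; norm_num
    have hvolAc : ENNReal.ofReal δ ≤ volume (Aᶜ ∩ K) := by
      have hsub : Aᶜ ⊆ (Aᶜ ∩ K) ∪ Kᶜ := by
        intro x hx
        by_cases hxK : x ∈ K
        · exact Or.inl ⟨hx, hxK⟩
        · exact Or.inr hxK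
      have h1 : μ Aᶜ ≤ μ (Aᶜ ∩ K) + μ Kᶜ := (measure_mono hsub).trans (measure_union_le _ _)
      have h2 : ENNReal.ofReal (ε/2) + ENNReal.ofReal (ε/2) ≤ μ (Aᶜ ∩ K) + ENNReal.ofReal (ε/2) := by
        calc ENNReal.ofReal (ε/2) + ENNReal.ofReal (ε/2) = ENNReal.ofReal ε := by
              rw [← ENNReal.ofReal_add (by positivity) (by positivity)]; norm_num
        _ ≤ μ Aᶜ := hεAc
        _ ≤ μ (Aᶜ ∩ K) + μ Kᶜ := h1
        _ ≤ μ (Aᶜ ∩ K) + ENNReal.ofReal (ε/2) := add_le_add_right hRc _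
      have h3 : ENNReal.ofReal (ε/2) ≤ μ (Aᶜ ∩ K) :=
        (ENNReal.add_le_add_iff_right ENNReal.ofReal_ne_top).1 h2
      have h4 : μ (Aᶜ ∩ K) ≤ ENNReal.ofReal (Real.exp M) * volume (Aᶜ ∩ K) := by
        rw [hμ]; exact density_ub V M K (Aᶜ ∩ K) (hA.compl.inter hK) inter_subset_right hM'
      calc ENNReal.ofReal δ = ENNReal.ofReal (Real.exp (-M)) * ENNReal.ofReal (ε/2) := by
            rw [← ENNReal.ofReal_mul (Real.exp_pos _).le]; congr 1; rw [hδdef]; ring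
      _ ≤ ENNReal.ofReal (Real.exp (-M)) * (ENNReal.ofReal (Real.exp M) * volume (Aᶜ ∩ K)) :=
            mul_le_mul_right (h3.trans h4) _
      _ = (ENNReal.ofReal (Real.exp (-M)) * ENNReal.ofReal (Real.exp M)) * volume (Aᶜ ∩ K) :=
            (mul_assoc _ _ _).symm
      _ = volume (Aᶜ ∩ K) := by
            rw [← ENNReal.ofReal_mul (Real.exp_pos _).le, ← Real.exp_add]; norm_num
    -- the per-h lower bound on the shell measure
    have key : ∀ h : ℝ, 0 < h → h ≤ R →
        ENNReal.ofReal (c₁ * h) ≤ μ {x | x ∉ A ∧ Metric.infDist x A ≤ h} := by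
      intro h hh0 hhR
      set shell := {x : EuclideanSpace ℝ (Fin d) | x ∉ A ∧ Metric.infDist x A ≤ h} with hshelldef
      have hshellm : MeasurableSet shell := by
        have hseq : shell = Aᶜ ∩ {x | Metric.infDist x A ≤ h} := by
          ext x; simp [hshelldef, Set.mem_inter_iff, Set.mem_compl_iff]
        rw [hseq]
        exact hA.compl.inter
          (measurableSet_le (continuous_infDist_pt A).measurable measurable_const)
      set Band := K ∩ {y : EuclideanSpace ℝ (Fin d) |
        h/2 < Metric.infDist y A ∧ Metric.infDist y A ≤ h} with hBanddef
      have hBandm : MeasurableSet Band :=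
        hK.inter ((measurableSet_lt measurable_const (continuous_infDist_pt A).measurable).inter
          (measurableSet_le (continuous_infDist_pt A).measurable measurable_const))
      have hBand_shell : Band ⊆ shell := by
        rintro y ⟨hyK, hy1, hy2⟩
        refine ⟨?_, hy2⟩
        intro hyA
        rw [Metric.infDist_zero_of_mem hyA] at hy1
        linarith
      set Zfar : EuclideanSpace ℝ (Fin d) → Set (EuclideanSpace ℝ (Fin d)) := fun x =>
        {z | z ∈ Aᶜ ∩ K ∧ ∃ t ∈ Icc (0:ℝ) 1, h < Metric.infDist ((1-t) • x + t • z) A}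
        with hZfardef
      have hZfarm : ∀ x, MeasurableSet (Zfar x) := by
        intro x
        have heq : Zfar x = (Aᶜ ∩ K) ∩
            (⋃ t ∈ Icc (0:ℝ) 1, {z | h < Metric.infDist ((1-t) • x + t • z) A}) := by
          ext z
          simp only [hZfardef, Set.mem_setOf_eq, Set.mem_inter_iff, Set.mem_iUnion,
            exists_prop]
        rw [heq]
        refine (hA.compl.inter hK).inter (IsOpen.measurableSet ?_)
        apply isOpen_biUnion
        intro t _
        exact isOpen_lt continuous_const
          ((continuous_infDist_pt A).comp (continuous_const.add (continuous_id.const_smul t)))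
      by_cases hcase : ∃ x₀, x₀ ∈ A ∩ K ∧ ENNReal.ofReal (δ/2) ≤ volume ((Aᶜ ∩ K) \ Zfar x₀)
      · -- near case: much of Aᶜ ∩ K is already within distance h of A
        obtain ⟨x₀, hx₀, hvolnear⟩ := hcase
        have hsub : (Aᶜ ∩ K) \ Zfar x₀ ⊆ shell ∩ K := by
          rintro z ⟨⟨hzA, hzK⟩, hznot⟩
          refine ⟨⟨hzA, ?_⟩, hzK⟩
          by_contra hgt
          push_neg at hgt
          exact hznot ⟨⟨hzA, hzK⟩, 1, ⟨by norm_num, le_refl _⟩, by simpa using hgt⟩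
        calc ENNReal.ofReal (c₁ * h) ≤ ENNReal.ofReal (Real.exp (-M) * (δ/2)) := by
              apply ENNReal.ofReal_le_ofReal
              have h1 : c₁ ≤ Real.exp (-M) * (δ/(2*R)) := by
                rw [hc₁def]
                exact mul_le_mul_of_nonneg_left (min_le_left _ _) (Real.exp_pos _).le
              calc c₁ * h ≤ (Real.exp (-M) * (δ/(2*R))) * h :=
                    mul_le_mul_of_nonneg_right h1 hh0.le
              _ ≤ Real.exp (-M) * (δ/2) := by
                    rw [mul_assoc]
                    apply mul_le_mul_of_nonneg_left _ (Real.exp_pos _).le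
                    rw [div_mul_eq_mul_div, div_le_div_iff₀ (by positivity) (by positivity)]
                    nlinarith
        _ = ENNReal.ofReal (Real.exp (-M)) * ENNReal.ofReal (δ/2) := by
              rw [← ENNReal.ofReal_mul (Real.exp_pos _).le]
        _ ≤ ENNReal.ofReal (Real.exp (-M)) * volume ((Aᶜ ∩ K) \ Zfar x₀) :=
              mul_le_mul_right hvolnear _
        _ ≤ ENNReal.ofReal (Real.exp (-M)) * volume (shell ∩ K) :=
              mul_le_mul_right (measure_mono hsub) _
        _ ≤ μ (shell ∩ K) := by
              rw [hμ]
              exact density_lb V M K (shell ∩ K) (hshellm.inter hK) inter_subset_right hM'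
        _ ≤ μ shell := measure_mono inter_subset_left
      · -- far case
        push_neg at hcase
        have hZfar_lb : ∀ x ∈ A ∩ K, ENNReal.ofReal (δ/2) ≤ volume (Zfar x) := by
          intro x hx
          have hcover : Aᶜ ∩ K ⊆ ((Aᶜ ∩ K) \ Zfar x) ∪ Zfar x := by
            intro z hz
            by_cases hzf : z ∈ Zfar x
            · exact Or.inr hzf
            · exact Or.inl ⟨hz, hzf⟩
          have h1 : ENNReal.ofReal δ ≤ volume ((Aᶜ ∩ K) \ Zfar x) + volume (Zfar x) :=
            le_trans hvolAc ((measure_mono hcover).trans (measure_union_le _ _))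
          have h2 : ENNReal.ofReal δ = ENNReal.ofReal (δ/2) + ENNReal.ofReal (δ/2) := by
            rw [← ENNReal.ofReal_add (by positivity) (by positivity)]; norm_num
          by_contra hlt
          push_neg at hlt
          have h3 := lt_of_le_of_lt h1 (ENNReal.add_lt_add (hcase x hx) hlt)
          rw [h2] at h3
          exact lt_irrefl _ h3
        -- the triple integral
        set F : ℝ × (EuclideanSpace ℝ (Fin d) × EuclideanSpace ℝ (Fin d)) → ℝ≥0∞ := fun q =>
          (A ∩ K).indicator (fun _ => (1:ℝ≥0∞)) q.2.1 *
            ((Aᶜ ∩ K).indicator (fun _ => (1:ℝ≥0∞)) q.2.2 *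
              Band.indicator (fun _ => (1:ℝ≥0∞)) ((1 - q.1) • q.2.1 + q.1 • q.2.2)) with hFdef
        have hψ : Continuous (fun q : ℝ × (EuclideanSpace ℝ (Fin d) × EuclideanSpace ℝ (Fin d)) =>
            (1 - q.1) • q.2.1 + q.1 • q.2.2) :=
          ((continuous_const.sub continuous_fst).smul continuous_snd.fst).add
            (continuous_fst.smul continuous_snd.snd)
        have hFmeas : Measurable F := by
          apply Measurable.mul
          · exact (measurable_const.indicator (hA.inter hK)).comp measurable_snd.fst
          apply Measurable.mul
          · exact (measurable_const.indicator (hA.compl.inter hK)).comp measurable_snd.snd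
          · exact (measurable_const.indicator hBandm).comp hψ.measurable
        have hind_ne_top : ∀ (s : Set (EuclideanSpace ℝ (Fin d)))
            (y : EuclideanSpace ℝ (Fin d)), s.indicator (fun _ => (1:ℝ≥0∞)) y ≠ ⊤ := by
          intro s y
          by_cases hy : y ∈ s <;> simp [hy]
        have hGmeas : Measurable (fun p : EuclideanSpace ℝ (Fin d) × EuclideanSpace ℝ (Fin d) =>
            ∫⁻ t in Icc (0:ℝ) 1, F (t, p)) := by
          have h' : Measurable (Function.uncurry (fun (t : ℝ)
              (p : EuclideanSpace ℝ (Fin d) × EuclideanSpace ℝ (Fin d)) => F (t, p))) := hFmeas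
          exact h'.lintegral_prod_left
        -- lower bound for the triple integral
        have hTlow : ENNReal.ofReal (h/(4*R)) * ENNReal.ofReal (δ/2) * ENNReal.ofReal δ ≤
            ∫⁻ q, F q ∂((volume.restrict (Icc (0:ℝ) 1)).prod
              ((volume : Measure (EuclideanSpace ℝ (Fin d))).prod volume)) := by
          have hswap1 : (∫⁻ q, F q ∂((volume.restrict (Icc (0:ℝ) 1)).prod
              ((volume : Measure (EuclideanSpace ℝ (Fin d))).prod volume))) =
              ∫⁻ p, (∫⁻ t in Icc (0:ℝ) 1, F (t, p))
                ∂((volume : Measure (EuclideanSpace ℝ (Fin d))).prod volume) :=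
            lintegral_prod_symm F hFmeas.aemeasurable
          have hswap2 : (∫⁻ p, (∫⁻ t in Icc (0:ℝ) 1, F (t, p))
                ∂((volume : Measure (EuclideanSpace ℝ (Fin d))).prod volume)) =
              ∫⁻ x, ∫⁻ z, (∫⁻ t in Icc (0:ℝ) 1, F (t, (x, z))) :=
            lintegral_prod _ hGmeas.aemeasurable
          rw [hswap1, hswap2]
          have hpt : ∀ x : EuclideanSpace ℝ (Fin d),
              (A ∩ K).indicator (fun _ => ENNReal.ofReal (h/(4*R)) * ENNReal.ofReal (δ/2)) x ≤
              ∫⁻ z, ∫⁻ t in Icc (0:ℝ) 1, F (t, (x, z)) := by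
            intro x
            by_cases hx : x ∈ A ∩ K
            swap
            · simp [Set.indicator_of_notMem hx]
            rw [Set.indicator_of_mem hx]
            have hpt2 : ∀ z : EuclideanSpace ℝ (Fin d),
                (Zfar x).indicator (fun _ => ENNReal.ofReal (h/(4*R))) z ≤
                ∫⁻ t in Icc (0:ℝ) 1, F (t, (x, z)) := by
              intro z
              by_cases hz : z ∈ Zfar x
              swap
              · simp [Set.indicator_of_notMem hz]
              rw [Set.indicator_of_mem hz]
              obtain ⟨hzmem, hex⟩ := hz
              have hzx : z ≠ x := by
                intro hzx
                exact hzmem.1 (hzx ▸ hx.1)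
              have hL : (0:ℝ) < ‖z - x‖ := norm_sub_pos_iff.2 hzx
              have hlip : ∀ s t : ℝ,
                  |Metric.infDist ((1-s) • x + s • z) A - Metric.infDist ((1-t) • x + t • z) A|
                    ≤ ‖z - x‖ * |s - t| := by
                intro s t
                have h1 := (lipschitz_infDist_pt A).dist_le_mul
                  ((1-s) • x + s • z) ((1-t) • x + t • z)
                rw [NNReal.coe_one, one_mul] at h1
                rw [← Real.dist_eq]
                apply h1.trans
                rw [dist_eq_norm]
                have h2 : ((1-s) • x + s • z) - ((1-t) • x + t • z) = (s - t) • (z - x) := by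
                  module
                rw [h2, norm_smul, Real.norm_eq_abs, mul_comm]
              have hzero : Metric.infDist ((1-(0:ℝ)) • x + (0:ℝ) • z) A = 0 := by
                simp [Metric.infDist_zero_of_mem hx.1]
              obtain ⟨t₀, t₂, h00, h21, hgap, hband⟩ :=
                crossing_aux (f := fun t => Metric.infDist ((1-t) • x + t • z) A)
                  hL hh0 hlip hzero hex
              have hnorm2R : ‖z - x‖ ≤ 2*R := by
                have hzn : ‖z‖ ≤ R := mem_closedBall_zero_iff.1 hzmem.2
                have hxn : ‖x‖ ≤ R := mem_closedBall_zero_iff.1 hx.2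
                calc ‖z - x‖ ≤ ‖z‖ + ‖x‖ := norm_sub_le _ _
                _ ≤ 2*R := by linarith
              calc ENNReal.ofReal (h/(4*R)) ≤ ENNReal.ofReal (t₂ - t₀) := by
                    apply ENNReal.ofReal_le_ofReal
                    apply le_trans _ hgap
                    rw [div_le_div_iff₀ (by positivity) (by positivity)]
                    nlinarith
              _ = ∫⁻ t in Icc (0:ℝ) 1, (Ioc t₀ t₂).indicator (fun _ => (1:ℝ≥0∞)) t := by
                    rw [lintegral_indicator_const measurableSet_Ioc,
                      Measure.restrict_apply measurableSet_Ioc]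
                    have hss : Ioc t₀ t₂ ∩ Icc (0:ℝ) 1 = Ioc t₀ t₂ := by
                      apply inter_eq_left.2
                      intro t ht
                      exact ⟨le_trans h00 ht.1.le, le_trans ht.2 h21⟩
                    rw [hss, Real.volume_Ioc, one_mul]
              _ ≤ ∫⁻ t in Icc (0:ℝ) 1, F (t, (x, z)) := by
                    apply lintegral_mono
                    intro t
                    by_cases ht : t ∈ Ioc t₀ t₂
                    swap
                    · simp [Set.indicator_of_notMem ht]
                    rw [Set.indicator_of_mem ht]
                    have hfb := hband t ht
                    have htK : (1-t) • x + t • z ∈ K :=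
                      hKconv hx.2 hzmem.2 (by linarith [ht.1, ht.2]) (by linarith [ht.1]) (by ring)
                    have hptBand : (1-t) • x + t • z ∈ Band := ⟨htK, hfb.1, hfb.2⟩
                    simp only [hFdef]
                    rw [Set.indicator_of_mem hx, Set.indicator_of_mem hzmem,
                      Set.indicator_of_mem hptBand]
                    simp
            calc ENNReal.ofReal (h/(4*R)) * ENNReal.ofReal (δ/2)
                ≤ ENNReal.ofReal (h/(4*R)) * volume (Zfar x) :=
                  mul_le_mul_right (hZfar_lb x hx) _
            _ = ∫⁻ z, (Zfar x).indicator (fun _ => ENNReal.ofReal (h/(4*R))) z :=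
                  (lintegral_indicator_const (hZfarm x) _).symm
            _ ≤ _ := lintegral_mono hpt2
          calc ENNReal.ofReal (h/(4*R)) * ENNReal.ofReal (δ/2) * ENNReal.ofReal δ
              ≤ ENNReal.ofReal (h/(4*R)) * ENNReal.ofReal (δ/2) * volume (A ∩ K) :=
                mul_le_mul_right hvolA _
          _ = ∫⁻ x, (A ∩ K).indicator
                (fun _ => ENNReal.ofReal (h/(4*R)) * ENNReal.ofReal (δ/2)) x :=
                (lintegral_indicator_const (hA.inter hK) _).symm
          _ ≤ _ := lintegral_mono hpt
        -- upper bound for the triple integral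
        have hTup : (∫⁻ q, F q ∂((volume.restrict (Icc (0:ℝ) 1)).prod
              ((volume : Measure (EuclideanSpace ℝ (Fin d))).prod volume))) ≤
            ENNReal.ofReal (2^d) * volume Band * volume K := by
          have hswap0 : (∫⁻ q, F q ∂((volume.restrict (Icc (0:ℝ) 1)).prod
              ((volume : Measure (EuclideanSpace ℝ (Fin d))).prod volume))) =
              ∫⁻ t in Icc (0:ℝ) 1, (∫⁻ p, F (t, p)
                ∂((volume : Measure (EuclideanSpace ℝ (Fin d))).prod volume)) :=
            lintegral_prod F hFmeas.aemeasurable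
          rw [hswap0]
          have hper : ∀ t : ℝ, (∫⁻ p, F (t, p)
              ∂((volume : Measure (EuclideanSpace ℝ (Fin d))).prod volume)) ≤
              ENNReal.ofReal (2^d) * volume Band * volume K := by
            intro t
            have hFt : Measurable (fun p : EuclideanSpace ℝ (Fin d) × EuclideanSpace ℝ (Fin d) =>
                F (t, p)) := hFmeas.comp measurable_prodMk_left
            rcases le_total t (1/2) with ht | ht
            · -- integrate over x innermost
              have hswapt : (∫⁻ p, F (t, p)
                  ∂((volume : Measure (EuclideanSpace ℝ (Fin d))).prod volume)) =
                  ∫⁻ z, ∫⁻ x, F (t, (x, z)) :=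
                lintegral_prod_symm _ hFt.aemeasurable
              rw [hswapt]
              have hinner : ∀ z : EuclideanSpace ℝ (Fin d),
                  (∫⁻ x, F (t, (x, z))) ≤ (Aᶜ ∩ K).indicator
                    (fun _ => ENNReal.ofReal (2^d) * volume Band) z := by
                intro z
                by_cases hz : z ∈ Aᶜ ∩ K
                swap
                · have hzero' : ∀ x : EuclideanSpace ℝ (Fin d), F (t, (x, z)) = 0 := by
                    intro x
                    simp only [hFdef]
                    rw [Set.indicator_of_notMem hz]
                    simp
                  simp [Set.indicator_of_notMem hz, hzero']
                rw [Set.indicator_of_mem hz]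
                calc (∫⁻ x, F (t, (x, z))) ≤
                    ∫⁻ x, Band.indicator (fun _ => (1:ℝ≥0∞)) ((1-t) • x + t • z) := by
                      apply lintegral_mono
                      intro x
                      simp only [hFdef]
                      rw [Set.indicator_of_mem hz]
                      by_cases hx : x ∈ A ∩ K
                      · rw [Set.indicator_of_mem hx]; simp
                      · rw [Set.indicator_of_notMem hx]; simp
                _ ≤ ENNReal.ofReal (2^d) * volume Band :=
                      scaled_lintegral Band hBandm (1-t) (by linarith) (t • z)
              calc (∫⁻ z, ∫⁻ x, F (t, (x, z))) ≤
                  ∫⁻ z, (Aᶜ ∩ K).indicator (fun _ => ENNReal.ofReal (2^d) * volume Band) z :=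
                    lintegral_mono hinner
              _ = ENNReal.ofReal (2^d) * volume Band * volume (Aᶜ ∩ K) :=
                    lintegral_indicator_const (hA.compl.inter hK) _
              _ ≤ ENNReal.ofReal (2^d) * volume Band * volume K :=
                    mul_le_mul_right (measure_mono inter_subset_right) _
            · -- integrate over z innermost
              have hswapt : (∫⁻ p, F (t, p)
                  ∂((volume : Measure (EuclideanSpace ℝ (Fin d))).prod volume)) =
                  ∫⁻ x, ∫⁻ z, F (t, (x, z)) :=
                lintegral_prod _ hFt.aemeasurable
              rw [hswapt]
              have hinner : ∀ x : EuclideanSpace ℝ (Fin d),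
                  (∫⁻ z, F (t, (x, z))) ≤ (A ∩ K).indicator
                    (fun _ => ENNReal.ofReal (2^d) * volume Band) x := by
                intro x
                by_cases hx : x ∈ A ∩ K
                swap
                · have hzero' : ∀ z : EuclideanSpace ℝ (Fin d), F (t, (x, z)) = 0 := by
                    intro z
                    simp only [hFdef]
                    rw [Set.indicator_of_notMem hx]
                    simp
                  simp [Set.indicator_of_notMem hx, hzero']
                rw [Set.indicator_of_mem hx]
                calc (∫⁻ z, F (t, (x, z))) ≤
                    ∫⁻ z, Band.indicator (fun _ => (1:ℝ≥0∞)) (t • z + (1-t) • x) := by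
                      apply lintegral_mono
                      intro z
                      simp only [hFdef]
                      rw [Set.indicator_of_mem hx, one_mul]
                      have harg : (1-t) • x + t • z = t • z + (1-t) • x := by abel
                      rw [harg]
                      by_cases hz : z ∈ Aᶜ ∩ K
                      · rw [Set.indicator_of_mem hz]; simp
                      · rw [Set.indicator_of_notMem hz]; simp
                _ ≤ ENNReal.ofReal (2^d) * volume Band :=
                      scaled_lintegral Band hBandm t (by linarith) ((1-t) • x)
              calc (∫⁻ x, ∫⁻ z, F (t, (x, z))) ≤
                  ∫⁻ x, (A ∩ K).indicator (fun _ => ENNReal.ofReal (2^d) * volume Band) x :=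
                    lintegral_mono hinner
              _ = ENNReal.ofReal (2^d) * volume Band * volume (A ∩ K) :=
                    lintegral_indicator_const (hA.inter hK) _
              _ ≤ ENNReal.ofReal (2^d) * volume Band * volume K :=
                    mul_le_mul_right (measure_mono inter_subset_right) _
          calc (∫⁻ t in Icc (0:ℝ) 1, ∫⁻ p, F (t, p)
                ∂((volume : Measure (EuclideanSpace ℝ (Fin d))).prod volume)) ≤
              ∫⁻ _t in Icc (0:ℝ) 1, (ENNReal.ofReal (2^d) * volume Band * volume K) :=
                lintegral_mono fun t => hper t
          _ = ENNReal.ofReal (2^d) * volume Band * volume K * volume (Icc (0:ℝ) 1) :=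
                setLIntegral_const _ _
          _ = ENNReal.ofReal (2^d) * volume Band * volume K := by
                rw [Real.volume_Icc]
                norm_num
        -- combine the bounds
        have hcomb : ENNReal.ofReal (h/(4*R) * (δ/2) * δ) ≤
            ENNReal.ofReal (2^d * κ) * volume Band := by
          have h1 := hTlow.trans hTup
          have e1 : ENNReal.ofReal (h/(4*R) * (δ/2) * δ)
              = ENNReal.ofReal (h/(4*R)) * ENNReal.ofReal (δ/2) * ENNReal.ofReal δ := by
            rw [ENNReal.ofReal_mul (by positivity : (0:ℝ) ≤ h/(4*R) * (δ/2)),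
              ENNReal.ofReal_mul (by positivity : (0:ℝ) ≤ h/(4*R))]
          have e2 : ENNReal.ofReal (2^d) * volume Band * volume K
              = ENNReal.ofReal (2^d * κ) * volume Band := by
            rw [hvolK, ENNReal.ofReal_mul (by positivity : (0:ℝ) ≤ (2:ℝ)^d)]
            ring
          rw [e1, ← e2]
          exact h1
        have hBand_vol : ENNReal.ofReal (c₂ * h) ≤ volume Band := by
          have h2 : ENNReal.ofReal (c₂ * h) * ENNReal.ofReal (2^d * κ) ≤
              volume Band * ENNReal.ofReal (2^d * κ) := by
            rw [← ENNReal.ofReal_mul (by positivity)]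
            calc ENNReal.ofReal (c₂ * h * (2^d * κ)) = ENNReal.ofReal (h/(4*R) * (δ/2) * δ) := by
                  congr 1
                  rw [hc₂def]
                  field_simp
            _ ≤ ENNReal.ofReal (2^d * κ) * volume Band := hcomb
            _ = volume Band * ENNReal.ofReal (2^d * κ) := mul_comm _ _
          exact (ENNReal.mul_le_mul_iff_left
            (ENNReal.ofReal_pos.2 (by positivity)).ne' ENNReal.ofReal_ne_top).1 h2
        calc ENNReal.ofReal (c₁ * h) ≤ ENNReal.ofReal (Real.exp (-M) * (c₂ * h)) := by
              apply ENNReal.ofReal_le_ofReal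
              have h1 : c₁ ≤ Real.exp (-M) * c₂ := by
                rw [hc₁def]
                exact mul_le_mul_of_nonneg_left (min_le_right _ _) (Real.exp_pos _).le
              calc c₁ * h ≤ (Real.exp (-M) * c₂) * h := mul_le_mul_of_nonneg_right h1 hh0.le
              _ = Real.exp (-M) * (c₂ * h) := by ring
        _ = ENNReal.ofReal (Real.exp (-M)) * ENNReal.ofReal (c₂ * h) := by
              rw [← ENNReal.ofReal_mul (Real.exp_pos _).le]
        _ ≤ ENNReal.ofReal (Real.exp (-M)) * volume Band := mul_le_mul_right hBand_vol _
        _ ≤ μ Band := by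
              rw [hμ]
              exact density_lb V M K Band hBandm inter_subset_left hM'
        _ ≤ μ shell := measure_mono hBand_shell
    -- from the per-h bound to the liminf
    have hbd : ENNReal.ofReal c₁ ≤ boundaryMeasure μ A := by
      apply le_liminf_of_le (by isBoundedDefault)
      filter_upwards [Ioc_mem_nhdsGT_of_mem ⟨le_refl (0:ℝ), hR0⟩] with h hh
      have hkey := key h hh.1 hh.2
      calc ENNReal.ofReal c₁ = ENNReal.ofReal (c₁ * h) / ENNReal.ofReal h := by
            rw [ENNReal.ofReal_mul hc₁0.le, mul_div_assoc,
              ENNReal.div_self (ENNReal.ofReal_pos.2 hh.1).ne' ENNReal.ofReal_ne_top, mul_one]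
      _ ≤ μ {x | x ∉ A ∧ Metric.infDist x A ≤ h} / ENNReal.ofReal h :=
            ENNReal.div_le_div_right hkey _
    calc ENNReal.ofReal (c * I m) ≤ ENNReal.ofReal c₁ := by
          apply ENNReal.ofReal_le_ofReal
          have hIm_le : I m ≤ I (1/2) := hImono ⟨hm0, hm12⟩ ⟨by norm_num, le_refl _⟩ hm12
          have hcle : c ≤ c₁ / I (1/2) := min_le_right _ _
          calc c * I m ≤ c * I (1/2) := mul_le_mul_of_nonneg_left hIm_le hc0.le
          _ ≤ (c₁ / I (1/2)) * I (1/2) := mul_le_mul_of_nonneg_right hcle hI2.le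
          _ = c₁ := div_mul_cancel₀ _ hI2.ne'
    _ ≤ boundaryMeasure μ A := hbd
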